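/- Let α > 0, ρ > 0, and let p_1,...,p_N ∈ [q, 1) with q ∈ (0,1), N ≥ 2. For node ℓ with b_ℓ = e^{ρ}∏_{k≠ℓ}(1-p_k)^{-1}, let p_ℓ^br ∈ (0,1) satisfy e^{-α p_ℓ^br} = p_ℓ^br(1 + 1/b_ℓ). Then for every j ≠ ℓ, the partial derivative of p_ℓ^br with respect to p_j equals e^{-ρ}∏_{k≠ℓ,j}(1-p_k) / ((α + 1/p_ℓ^br)(1 + 1/b_ℓ)), and the sum over j ≠ ℓ of these partial derivatives is at most (N-1)(1-q)^{N-2} / (e^{ρ}(α+1)). -/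

import Mathlib

open Real Set Finset

theorem stmt_14 (N : ℕ) (hN : 2 ≤ N) (α ρ q : ℝ) (hα : 0 < α) (hρ : 0 < ρ)
    (hq : q ∈ Set.Ioo (0 : ℝ) 1)
    (p : Fin N → ℝ) (hp : ∀ k, p k ∈ Set.Ico q 1)
    (ℓ : Fin N)
    (b : (Fin N → ℝ) → ℝ)
    (hb : ∀ x, b x = Real.exp ρ * (∏ k ∈ Finset.univ \ {ℓ}, (1 - x k))⁻¹)
    (pbr : (Fin N → ℝ) → ℝ)
    (hrange : ∀ x : Fin N → ℝ, (∀ k, x k ∈ Set.Ioo (0 : ℝ) 1) →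
      pbr x ∈ Set.Ioo (0 : ℝ) 1)
    (heq : ∀ x : Fin N → ℝ, (∀ k, x k ∈ Set.Ioo (0 : ℝ) 1) →
      Real.exp (-α * pbr x) = pbr x * (1 + 1 / b x))
    (hdiff : ∀ j : Fin N, DifferentiableAt ℝ (fun t => pbr (Function.update p j t)) (p j)) :
    (∀ j : Fin N, j ≠ ℓ →
      deriv (fun t => pbr (Function.update p j t)) (p j)
        = Real.exp (-ρ) * (∏ k ∈ Finset.univ \ {ℓ, j}, (1 - p k))
            / ((α + 1 / pbr p) * (1 + 1 / b p))) ∧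
    ∑ j ∈ Finset.univ \ {ℓ}, deriv (fun t => pbr (Function.update p j t)) (p j)
      ≤ ((N : ℝ) - 1) * (1 - q) ^ (N - 2) / (Real.exp ρ * (α + 1)) := by
  obtain ⟨hq0, hq1⟩ := hq
  have hp01 : ∀ k, p k ∈ Set.Ioo (0 : ℝ) 1 :=
    fun k => ⟨lt_of_lt_of_le hq0 (hp k).1, (hp k).2⟩
  have hPmem := hrange p hp01
  set P := pbr p with hP
  have hP0 : 0 < P := hPmem.1
  have hP1 : P < 1 := hPmem.2
  have hprodpos : 0 < ∏ k ∈ Finset.univ \ {ℓ}, (1 - p k) :=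
    Finset.prod_pos (fun k _ => by linarith [(hp01 k).2])
  have hbp : 0 < b p := by
    rw [hb]; positivity
  have hB0 : 0 < 1 + 1 / b p := by positivity
  have hbase : Real.exp (-α * P) = P * (1 + 1 / b p) := heq p hp01
  -- main derivative formula
  have key : ∀ j : Fin N, j ≠ ℓ →
      deriv (fun t => pbr (Function.update p j t)) (p j)
        = Real.exp (-ρ) * (∏ k ∈ Finset.univ \ {ℓ, j}, (1 - p k))
            / ((α + 1 / P) * (1 + 1 / b p)) := by
    intro j hj
    set C := ∏ k ∈ Finset.univ \ {ℓ, j}, (1 - p k) with hC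
    set D := Real.exp (-ρ) with hD
    have hCpos : 0 < C :=
      Finset.prod_pos (fun k _ => by linarith [(hp01 k).2])
    have hjmem : j ∈ Finset.univ \ ({ℓ} : Finset (Fin N)) := by simp [hj]
    have hsetdiff : (Finset.univ \ {ℓ, j} : Finset (Fin N))
        = (Finset.univ \ {ℓ}).erase j := by
      ext k
      simp only [Finset.mem_sdiff, Finset.mem_univ, Finset.mem_insert,
        Finset.mem_singleton, Finset.mem_erase, true_and]
      tauto
    have hsplit : ∀ x : Fin N → ℝ,
        ∏ k ∈ Finset.univ \ {ℓ}, (1 - x k)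
          = (1 - x j) * ∏ k ∈ Finset.univ \ {ℓ, j}, (1 - x k) := by
      intro x
      rw [hsetdiff]
      exact (Finset.mul_prod_erase _ _ hjmem).symm
    have hinvb : 1 / b p = D * ((1 - p j) * C) := by
      rw [hb, hsplit p, hD, Real.exp_neg, one_div, mul_inv, inv_inv]
    have heqlocal : ∀ t ∈ Set.Ioo (0 : ℝ) 1,
        Real.exp (-α * pbr (Function.update p j t))
          = pbr (Function.update p j t) * (1 + D * ((1 - t) * C)) := by
      intro t ht
      have hx : ∀ k, Function.update p j t k ∈ Set.Ioo (0 : ℝ) 1 := by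
        intro k
        by_cases h : k = j
        · subst h; simpa using ht
        · rw [Function.update_of_ne h]; exact hp01 k
      rw [heq _ hx, hb]
      have hprod : ∏ k ∈ Finset.univ \ {ℓ}, (1 - Function.update p j t k)
          = (1 - t) * C := by
        rw [hsplit]
        congr 1
        · simp
        · apply Finset.prod_congr rfl
          intro k hk
          have hkj : k ≠ j := by
            simp only [Finset.mem_sdiff, Finset.mem_univ, Finset.mem_insert,
              Finset.mem_singleton, true_and] at hk
            tauto
          rw [Function.update_of_ne hkj]
      rw [hprod, hD, Real.exp_neg, one_div, mul_inv, inv_inv]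
    set g' := deriv (fun t => pbr (Function.update p j t)) (p j) with hg'
    have hg : HasDerivAt (fun t => pbr (Function.update p j t)) g' (p j) :=
      (hdiff j).hasDerivAt
    have hupd : Function.update p j (p j) = p := Function.update_eq_self j p
    -- derivative of exp part
    have h1 : HasDerivAt (fun t => -α * pbr (Function.update p j t)) (-α * g') (p j) :=
      hg.const_mul (-α)
    have h2 : HasDerivAt (fun t => Real.exp (-α * pbr (Function.update p j t)))
        (Real.exp (-α * P) * (-α * g')) (p j) := by
      have := h1.exp
      simpa [hupd, hP] using this
    -- derivative of the affine part
    have h3 : HasDerivAt (fun t : ℝ => 1 + D * ((1 - t) * C)) (D * (-1 * C)) (p j) := by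
      have ha : HasDerivAt (fun t : ℝ => (1 : ℝ) - t) (-1) (p j) := by
        simpa using (hasDerivAt_id (p j)).const_sub 1
      have hb' := ((ha.mul_const C).const_mul D).const_add 1
      simpa using hb'
    have h4 : HasDerivAt
        (fun t => pbr (Function.update p j t) * (1 + D * ((1 - t) * C)))
        (g' * (1 + D * ((1 - p j) * C)) + P * (D * (-1 * C))) (p j) := by
      have := hg.mul h3
      rw [hupd] at this; exact this
    have hF : HasDerivAt
        (fun t => Real.exp (-α * pbr (Function.update p j t))
          - pbr (Function.update p j t) * (1 + D * ((1 - t) * C)))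
        (Real.exp (-α * P) * (-α * g')
          - (g' * (1 + D * ((1 - p j) * C)) + P * (D * (-1 * C)))) (p j) :=
      h2.sub h4
    have hF0 : HasDerivAt
        (fun t => Real.exp (-α * pbr (Function.update p j t))
          - pbr (Function.update p j t) * (1 + D * ((1 - t) * C))) 0 (p j) := by
      apply (hasDerivAt_const (p j) (0 : ℝ)).congr_of_eventuallyEq
      filter_upwards [Ioo_mem_nhds (hp01 j).1 (hp01 j).2] with t ht
      rw [heqlocal t ht]; ring
    have hE : Real.exp (-α * P) * (-α * g')
        - (g' * (1 + D * ((1 - p j) * C)) + P * (D * (-1 * C))) = 0 :=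
      hF.unique hF0
    rw [hbase] at hE
    have hEb : g' * ((1 + 1 / b p) * (1 + α * P)) = P * D * C := by
      have h5 : 1 + D * ((1 - p j) * C) = 1 + 1 / b p := by rw [hinvb]
      rw [h5] at hE
      nlinarith [hE]
    have hαP : 0 < 1 + α * P := by positivity
    have hgval : g' = P * D * C / ((1 + 1 / b p) * (1 + α * P)) := by
      field_simp at hEb ⊢
      linarith [hEb]
    have hPi : 0 < 1 / P := one_div_pos.mpr hP0
    have hA : 0 < α + 1 / P := by linarith
    have hαP' : 0 < (1 + 1 / b p) * (1 + α * P) := mul_pos hB0 hαP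
    rw [hgval]
    rw [div_eq_div_iff (ne_of_gt hαP') (ne_of_gt (mul_pos hA hB0))]
    field_simp
    ring
  refine ⟨key, ?_⟩
  -- the bound part
  have hcard1 : (Finset.univ \ ({ℓ} : Finset (Fin N))).card = N - 1 := by
    rw [Finset.card_sdiff_of_subset (Finset.subset_univ _)]
    simp
  have hbound : ∀ j ∈ Finset.univ \ ({ℓ} : Finset (Fin N)),
      deriv (fun t => pbr (Function.update p j t)) (p j)
        ≤ (1 - q) ^ (N - 2) / (Real.exp ρ * (α + 1)) := by
    intro j hjmem
    have hj : j ≠ ℓ := by simpa using (Finset.mem_sdiff.mp hjmem).2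
    rw [key j hj]
    have hjℓ : ℓ ≠ j := fun h => hj h.symm
    have hcard2 : (Finset.univ \ ({ℓ, j} : Finset (Fin N))).card = N - 2 := by
      rw [Finset.card_sdiff_of_subset (Finset.subset_univ _)]
      simp [Finset.card_pair hjℓ]
    have hCle : (∏ k ∈ Finset.univ \ {ℓ, j}, (1 - p k)) ≤ (1 - q) ^ (N - 2) := by
      calc (∏ k ∈ Finset.univ \ {ℓ, j}, (1 - p k))
          ≤ ∏ _k ∈ Finset.univ \ {ℓ, j}, (1 - q) := by
            apply Finset.prod_le_prod
            · intro k _; linarith [(hp01 k).2]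
            · intro k _; linarith [(hp k).1]
        _ = (1 - q) ^ (N - 2) := by rw [Finset.prod_const, hcard2]
    have hCnn : 0 ≤ ∏ k ∈ Finset.univ \ {ℓ, j}, (1 - p k) :=
      Finset.prod_nonneg (fun k _ => by linarith [(hp01 k).2])
    have hnum : Real.exp (-ρ) * (∏ k ∈ Finset.univ \ {ℓ, j}, (1 - p k))
        ≤ Real.exp (-ρ) * (1 - q) ^ (N - 2) :=
      mul_le_mul_of_nonneg_left hCle (Real.exp_nonneg _)
    calc Real.exp (-ρ) * (∏ k ∈ Finset.univ \ {ℓ, j}, (1 - p k))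
          / ((α + 1 / P) * (1 + 1 / b p))
        ≤ Real.exp (-ρ) * (1 - q) ^ (N - 2) / ((α + 1 / P) * (1 + 1 / b p)) := by
          have hPi : 0 < 1 / P := one_div_pos.mpr hP0
          exact div_le_div_of_nonneg_right hnum
            (le_of_lt (mul_pos (by linarith) hB0))
      _ ≤ Real.exp (-ρ) * (1 - q) ^ (N - 2) / (α + 1) := by
          have h1P : 1 ≤ 1 / P := (le_div_iff₀ hP0).mpr (by linarith)
          have hinvbnn : 0 ≤ 1 / b p := le_of_lt (one_div_pos.mpr hbp)
          have hA : 0 < α + 1 / P := by linarith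
          have hfac : (α + 1 : ℝ) ≤ (α + 1 / P) * (1 + 1 / b p) := by
            nlinarith [mul_nonneg hα.le hinvbnn, mul_nonneg (zero_le_one.trans h1P) hinvbnn]
          have hnumnn : 0 ≤ Real.exp (-ρ) * (1 - q) ^ (N - 2) := by
            have : (0:ℝ) ≤ 1 - q := by linarith
            positivity
          exact div_le_div_of_nonneg_left hnumnn (by linarith) hfac
      _ = (1 - q) ^ (N - 2) / (Real.exp ρ * (α + 1)) := by
          rw [Real.exp_neg]
          field_simp
  calc ∑ j ∈ Finset.univ \ {ℓ}, deriv (fun t => pbr (Function.update p j t)) (p j)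
      ≤ ∑ _j ∈ Finset.univ \ ({ℓ} : Finset (Fin N)),
          (1 - q) ^ (N - 2) / (Real.exp ρ * (α + 1)) :=
        Finset.sum_le_sum hbound
    _ = ((N : ℝ) - 1) * ((1 - q) ^ (N - 2) / (Real.exp ρ * (α + 1))) := by
        rw [Finset.sum_const, hcard1, nsmul_eq_mul]
        congr 1
        have : (1 : ℕ) ≤ N := le_trans (by norm_num) hN
        push_cast [Nat.cast_sub this]
        ring
    _ = ((N : ℝ) - 1) * (1 - q) ^ (N - 2) / (Real.exp ρ * (α + 1)) := by ring
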